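/- arXiv:2210.06992 — 2 statements merged into one kernel-verified Lean document; each statement's English description precedes it below -/
import Mathlib

section
/- Assume q is odd. Let a and b be uniformizers of F such that a·b⁻¹ is not a square in F, let E₁/F be a quadratic extension containing an element e₁ with e₁² = a, and let E₂/F be a quadratic extension containing an element e₂ with e₂² = b. Then every nonzero x ∈ F can be written as x = N_{E₁/F}(y) · N_{E₂/F}(z) for some nonzero y ∈ E₁ and nonzero z ∈ E₂. -/
open IsLocalRing Polynomial

noncomputable section

variable (p : ℕ) [Fact p.Prime]

/-- The natural map `𝒪_F → 𝒪_E` between the integral closures of `ℤ_p` induced by an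
extension `E/F` of `p`-adic fields. -/
def mapRingOfIntegers (F E : Type) [Field F] [Field E]
    [Algebra ℤ_[p] F] [Algebra ℤ_[p] E] [Algebra F E] [IsScalarTower ℤ_[p] F E] :
    integralClosure ℤ_[p] F →+* integralClosure ℤ_[p] E where
  toFun x := ⟨algebraMap F E x, IsIntegral.map (IsScalarTower.toAlgHom ℤ_[p] F E) x.2⟩
  map_one' := by ext; simp
  map_mul' x y := by ext; simp
  map_zero' := by ext; simp
  map_add' x y := by ext; simp

lemma norm_sqrt {F E : Type} [Field F] [Field E] [Algebra F E]
    (hd : Module.finrank F E = 2) (α : F) (hα : ¬ ∃ c : F, c ^ 2 = α)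
    (e : E) (he : e ^ 2 = algebraMap F E α) : Algebra.norm F e = -α := by
  have hfin : FiniteDimensional F E := Module.finite_of_finrank_pos (by omega)
  have li : LinearIndependent F ![(1 : E), e] := by
    rw [LinearIndependent.pair_iff]
    intro s t hst
    by_cases ht : t = 0
    · subst ht
      rw [zero_smul, add_zero] at hst
      rcases smul_eq_zero.mp hst with h | h
      · exact ⟨h, rfl⟩
      · exact absurd h one_ne_zero
    · exfalso
      apply hα
      refine ⟨-s / t, ?_⟩
      have h1 : t • e = (-s) • (1 : E) := by
        rw [neg_smul, ← eq_neg_of_add_eq_zero_right hst]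
      have h2 : e = (-s / t) • (1 : E) := by
        rw [div_eq_mul_inv, mul_comm, mul_smul]
        rw [← h1, inv_smul_smul₀ ht]
      rw [← Algebra.algebraMap_eq_smul_one] at h2
      rw [h2, ← map_pow] at he
      exact (algebraMap F E).injective he
  let B : Module.Basis (Fin 2) F E := basisOfLinearIndependentOfCardEqFinrank li (by simp [hd])
  have hB0 : B 0 = 1 := by simp [B, coe_basisOfLinearIndependentOfCardEqFinrank]
  have hB1 : B 1 = e := by simp [B, coe_basisOfLinearIndependentOfCardEqFinrank]
  have key : ∀ i, e * B i = if i = 0 then B 1 else α • B 0 := by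
    intro i
    fin_cases i
    · simp [hB0, hB1]
    · simp only [Fin.mk_one, one_ne_zero, if_false, hB1, hB0, ← pow_two, he,
        Algebra.algebraMap_eq_smul_one]

  rw [Algebra.norm_eq_matrix_det B, Matrix.det_fin_two]
  simp only [Algebra.leftMulMatrix_eq_repr_mul, key]
  simp [B.repr_self, map_smul, Finsupp.single_apply]

lemma smul_top_self {R : Type} [CommRing R] (I : Ideal R) :
    (I • ⊤ : Submodule R R) = I := by
  rw [smul_eq_mul, Ideal.mul_top]

lemma mem_smul_top_iff_repr {R M ι : Type} [CommRing R] [AddCommGroup M] [Module R M]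
    [Fintype ι] (B : Module.Basis ι R M) (I : Ideal R) (x : M) :
    x ∈ (I • ⊤ : Submodule R M) ↔ ∀ i, B.repr x i ∈ I := by
  constructor
  · intro hx
    refine Submodule.smul_induction_on hx ?_ ?_
    · intro r hr m _ i
      rw [map_smul, Finsupp.smul_apply, smul_eq_mul]
      exact I.mul_mem_right _ hr
    · intro m n hm hn i
      rw [map_add, Finsupp.add_apply]
      exact I.add_mem (hm i) (hn i)
  · intro h
    rw [← B.sum_repr x]
    exact Submodule.sum_mem _ fun i _ => Submodule.smul_mem_smul (h i) trivial

lemma isAdicComplete_of_basis {R M ι : Type} [CommRing R] [AddCommGroup M] [Module R M]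
    [Fintype ι] (I : Ideal R) [hc : IsAdicComplete I R] (B : Module.Basis ι R M) :
    IsAdicComplete I M := by
  refine { toIsHausdorff := ⟨?_⟩, toIsPrecomplete := ⟨?_⟩ }
  · intro x hx
    have hz : ∀ i, B.repr x i = 0 := by
      intro i
      refine hc.haus _ fun n => ?_
      rw [SModEq.zero, smul_top_self]
      exact (mem_smul_top_iff_repr B _ x).mp ((SModEq.zero).mp (hx n)) i
    have : B.repr x = 0 := Finsupp.ext hz
    simpa using congrArg B.repr.symm this
  · intro f hf
    have hcoord : ∀ i, ∃ L, ∀ n, B.repr (f n) i ≡ L [SMOD (I ^ n • ⊤ : Submodule R R)] := by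
      intro i
      apply hc.prec
      intro m n hmn
      rw [SModEq.sub_mem, smul_top_self]
      have h1 := (SModEq.sub_mem).mp (hf hmn)
      have := (mem_smul_top_iff_repr B _ _).mp h1 i
      simpa [map_sub] using this
    choose L hL using hcoord
    refine ⟨B.repr.symm (Finsupp.equivFunOnFinite.symm L), fun n => ?_⟩
    rw [SModEq.sub_mem]
    rw [mem_smul_top_iff_repr B]
    intro i
    have := (SModEq.sub_mem).mp (hL i n)
    rw [smul_top_self] at this
    simpa [map_sub, Finsupp.coe_equivFunOnFinite_symm] using this

lemma isAdicComplete_sandwich {R O : Type} [CommRing R] [CommRing O] [Algebra R O]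
    (I : Ideal R) (J : Ideal O)
    (h1 : ∀ k : ℕ, ∃ n : ℕ, ∀ x : O, x ∈ J ^ n → x ∈ (I ^ k • ⊤ : Submodule R O))
    (h2 : ∀ n : ℕ, ∃ k : ℕ, ∀ x : O, x ∈ (I ^ k • ⊤ : Submodule R O) → x ∈ J ^ n)
    (hc : IsAdicComplete I O) : IsAdicComplete J O := by
  have smul_top_J : ∀ n : ℕ, (J ^ n • ⊤ : Submodule O O) = J ^ n := fun n => smul_top_self _
  refine { toIsHausdorff := ⟨?_⟩, toIsPrecomplete := ⟨?_⟩ }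
  · intro x hx
    refine hc.haus x fun k => ?_
    rw [SModEq.zero]
    obtain ⟨n, hn⟩ := h1 k
    refine hn x ?_
    have := (SModEq.zero).mp (hx n)
    rwa [smul_top_J] at this
  · intro f hf
    set n₀ : ℕ → ℕ := fun k => Classical.choose (h1 k) with hn₀
    have hn₀s : ∀ k, ∀ x : O, x ∈ J ^ (n₀ k) → x ∈ (I ^ k • ⊤ : Submodule R O) :=
      fun k => Classical.choose_spec (h1 k)
    set m : ℕ → ℕ := fun k => (Finset.range (k+1)).sup n₀ + k with hm
    have hmono : Monotone m := by
      intro k k' hk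
      exact add_le_add (Finset.sup_mono (Finset.range_subset_range.mpr (by omega))) hk
    have hmk : ∀ k, n₀ k ≤ m k := fun k =>
      le_trans (Finset.le_sup (Finset.mem_range.mpr (by omega))) (Nat.le_add_right _ _)
    have hmk2 : ∀ k, k ≤ m k := fun k => Nat.le_add_left _ _
    have hsub : ∀ {m' n' : ℕ}, m' ≤ n' → f n' - f m' ∈ J ^ m' := by
      intro m' n' h
      have := (SModEq.sub_mem).mp (hf h).symm
      rwa [smul_top_J] at this
    have hprec : ∃ L, ∀ k, f (m k) ≡ L [SMOD (I ^ k • ⊤ : Submodule R O)] := by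
      apply hc.prec
      intro k k' hk
      rw [SModEq.sub_mem]
      refine hn₀s k _ ?_
      have h3 : f (m k) - f (m k') ∈ J ^ (m k) := by
        have := hsub (hmono hk)
        simpa using (neg_mem this : -(f (m k') - f (m k)) ∈ _)
      exact Ideal.pow_le_pow_right (hmk k) h3
    obtain ⟨L, hL⟩ := hprec
    refine ⟨L, fun n => ?_⟩
    rw [SModEq.sub_mem, smul_top_J]
    obtain ⟨k₂, hk₂⟩ := h2 n
    set K := max k₂ n with hK
    have e1 : f n - f (m K) ∈ J ^ n := by
      have h4 : f (m K) - f n ∈ J ^ n := hsub (le_trans (le_max_right _ _) (hmk2 K))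
      simpa using (neg_mem h4 : -(f (m K) - f n) ∈ _)
    have e2 : f (m K) - L ∈ J ^ n := by
      refine hk₂ _ ?_
      have := (SModEq.sub_mem).mp (hL K)
      exact Submodule.smul_mono_left (Ideal.pow_le_pow_right (le_max_left _ _)) this
    have := add_mem e1 e2
    simpa using this

open IsLocalRing Polynomial

section Key

variable {O : Type} [CommRing O] [IsDomain O] [IsDiscreteValuationRing O]
variable {K : Type} [Field K] [Algebra O K] [IsFractionRing O K]

lemma exists_lift_of_sq {w : O} {c : K} (hc : c ^ 2 = algebraMap O K w) :
    ∃ d : O, algebraMap O K d = c ∧ d ^ 2 = w := by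
  have hint : IsIntegral O c := by
    refine ⟨X ^ 2 - C w, monic_X_pow_sub_C _ two_ne_zero, ?_⟩
    simp [eval₂, hc]
  obtain ⟨d, hd⟩ := IsIntegrallyClosed.isIntegral_iff.mp hint
  refine ⟨d, hd, ?_⟩
  have : algebraMap O K (d ^ 2) = algebraMap O K w := by rw [map_pow, hd, hc]
  exact IsFractionRing.injective O K this

lemma irreducible_not_sq {π : O} (hπ : Irreducible π) :
    ¬ ∃ c : K, c ^ 2 = algebraMap O K π := by
  rintro ⟨c, hc⟩
  obtain ⟨d, -, hd⟩ := exists_lift_of_sq hc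
  have hππ : π = d * d := by rw [← hd]; ring
  rcases hπ.isUnit_or_isUnit hππ with h | h <;>
    exact hπ.not_isUnit (hππ ▸ h.mul h)

lemma unit_sq_of_residue_sq [HenselianRing O (maximalIdeal O)]
    (h2 : (2 : O) ∉ maximalIdeal O)
    {w : O} (hw : IsUnit w) (hsq : IsSquare (residue O w)) :
    ∃ d : O, d ^ 2 = w := by
  obtain ⟨s, hs⟩ := hsq
  obtain ⟨c₀, hc₀⟩ := residue_surjective (R := O) s
  have hres_c₀ : residue O c₀ ≠ 0 := by
    intro h
    have hwres : residue O w ≠ 0 := by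
      have : IsUnit (residue O w) := hw.map _
      exact this.ne_zero
    apply hwres
    rw [hs, ← hc₀, h, mul_zero]
  have hmonic : (X ^ 2 - C w).Monic := monic_X_pow_sub_C _ two_ne_zero
  have heval : (X ^ 2 - C w).eval c₀ ∈ maximalIdeal O := by
    have : residue O ((X ^ 2 - C w).eval c₀) = 0 := by
      simp only [eval_sub, eval_pow, eval_X, eval_C, map_sub, map_pow, hc₀]
      rw [hs]; ring
    rwa [← Ideal.Quotient.eq_zero_iff_mem]
  have hderiv : IsUnit (Ideal.Quotient.mk (maximalIdeal O)
      (((X ^ 2 - C w).derivative).eval c₀)) := by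
    have hd : (X ^ 2 - C w).derivative = C 2 * X := by
      simp [derivative_sub, derivative_X_pow]
      rw [← C_1, ← C_add, one_add_one_eq_two]
    rw [hd]
    have h2res : residue O (2 : O) ≠ 0 := fun h =>
      h2 (Ideal.Quotient.eq_zero_iff_mem.mp h)
    have : residue O ((C (2:O) * X).eval c₀) ≠ 0 := by
      simp only [eval_mul, eval_C, eval_X, map_mul]
      exact mul_ne_zero h2res hres_c₀
    exact isUnit_iff_ne_zero.mpr this
  obtain ⟨d, hroot, -⟩ := HenselianRing.is_henselian (X ^ 2 - C w) hmonic c₀ heval hderiv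
  refine ⟨d, ?_⟩
  have := hroot
  simp only [IsRoot, eval_sub, eval_pow, eval_X, eval_C, sub_eq_zero] at this
  exact this

lemma key_units [HenselianRing O (maximalIdeal O)]
    [Fintype (ResidueField O)] [DecidableEq (ResidueField O)]
    (h2 : (2 : O) ∉ maximalIdeal O)
    (w ν : Oˣ) (hw : ¬ ∃ c : K, c ^ 2 = algebraMap O K (w : O))
    (hν : ¬ ∃ c : K, c ^ 2 = algebraMap O K (ν : O)) :
    ∃ c : K, algebraMap O K (w : O) = algebraMap O K (ν : O) * c ^ 2 := by
  have hres : ∀ u : Oˣ, (¬ ∃ c : K, c ^ 2 = algebraMap O K (u : O)) →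
      ¬ IsSquare (residue O (u : O)) := by
    intro u hu hsq
    obtain ⟨d, hd⟩ := unit_sq_of_residue_sq h2 u.isUnit hsq
    exact hu ⟨algebraMap O K d, by rw [← map_pow, hd]⟩
  have hχw := quadraticChar_neg_one_iff_not_isSquare.mpr (hres w hw)
  have hχν := quadraticChar_neg_one_iff_not_isSquare.mpr (hres ν hν)
  have hne : residue O ((w : O) * (ν : O)) ≠ 0 :=
    (((w.isUnit.mul ν.isUnit).map (residue O))).ne_zero
  have hχ : quadraticChar (ResidueField O) (residue O ((w : O) * (ν : O))) = 1 := by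
    rw [map_mul, map_mul, hχw, hχν]; ring
  have hsq := (quadraticChar_one_iff_isSquare hne).mp hχ
  obtain ⟨d, hd⟩ := unit_sq_of_residue_sq h2 (w.isUnit.mul ν.isUnit) hsq
  have hν0 : algebraMap O K (ν : O) ≠ 0 := by
    intro h
    exact one_ne_zero (by
      have := congrArg (algebraMap O K) ν.mul_inv
      rw [map_mul, h, zero_mul, map_one] at this
      exact this.symm)
  refine ⟨algebraMap O K d / algebraMap O K (ν : O), ?_⟩
  rw [div_pow, ← map_pow, hd, map_mul]
  field_simp

end Key
open IsLocalRing Polynomial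

noncomputable section

variable (p : ℕ) [Fact p.Prime]


set_option synthInstance.maxHeartbeats 1000000 in
set_option maxHeartbeats 1000000 in
/-- Let `F` be a `p`-adic field with odd residue cardinality and let `a, b` be uniformizers
of `F` with `a·b⁻¹` not a square in `F`. If `E₁ = F(√a)` and `E₂ = F(√b)` are quadratic
extensions, then every nonzero `x ∈ F` is a product of a norm from `E₁` and a norm from
`E₂`. -/
theorem norms_two_ramified_quadratics (F : Type) [Field F] [Algebra ℚ_[p] F] [FiniteDimensional ℚ_[p] F]
    [Algebra ℤ_[p] F] [IsScalarTower ℤ_[p] ℚ_[p] F]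
    [IsLocalRing (integralClosure ℤ_[p] F)]
    (hq : Odd (Nat.card (ResidueField (integralClosure ℤ_[p] F))))
    (E₁ : Type) [Field E₁] [Algebra ℤ_[p] E₁] [Algebra F E₁] [IsScalarTower ℤ_[p] F E₁]
    [IsLocalRing (integralClosure ℤ_[p] E₁)]
    (E₂ : Type) [Field E₂] [Algebra ℤ_[p] E₂] [Algebra F E₂] [IsScalarTower ℤ_[p] F E₂]
    [IsLocalRing (integralClosure ℤ_[p] E₂)]
    (a b : integralClosure ℤ_[p] F) (ha : Irreducible a) (hb : Irreducible b)
    (hab : ¬ ∃ c : F, c ^ 2 = (a : F) * ((b : F))⁻¹)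
    (hd₁ : Module.finrank F E₁ = 2)
    (e₁ : E₁) (he₁ : e₁ ^ 2 = algebraMap F E₁ ((a : F)))
    (hd₂ : Module.finrank F E₂ = 2)
    (e₂ : E₂) (he₂ : e₂ ^ 2 = algebraMap F E₂ ((b : F))) :
    ∀ x : F, x ≠ 0 → ∃ (y : E₁) (z : E₂), y ≠ 0 ∧ z ≠ 0 ∧
      x = Algebra.norm F y * Algebra.norm F z := by

  classical
  intro x hx
  have hinj : Function.Injective (algebraMap ℤ_[p] F) := by
    rw [IsScalarTower.algebraMap_eq ℤ_[p] ℚ_[p] F]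
    exact (algebraMap ℚ_[p] F).injective.comp (IsFractionRing.injective ℤ_[p] ℚ_[p])
  haveI : Module.IsTorsionFree ℤ_[p] F := Module.isTorsionFree_iff_algebraMap_injective.mpr hinj
  haveI : IsDedekindDomain (integralClosure ℤ_[p] F) := integralClosure.isDedekindDomain ℤ_[p] ℚ_[p] F
  haveI : IsDiscreteValuationRing (integralClosure ℤ_[p] F) :=
    { not_a_field' := by
        intro hbot
        have h1 : a ∈ maximalIdeal (integralClosure ℤ_[p] F) := (mem_maximalIdeal a).mpr (mem_nonunits_iff.mpr ha.not_isUnit)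
        rw [hbot] at h1
        exact ha.ne_zero (Ideal.mem_bot.mp h1) }
  haveI : IsFractionRing (integralClosure ℤ_[p] F) F := integralClosure.isFractionRing_of_finite_extension ℚ_[p] F
  haveI : Module.Finite ℤ_[p] (integralClosure ℤ_[p] F) := IsIntegralClosure.finite ℤ_[p] ℚ_[p] F (integralClosure ℤ_[p] F)
  haveI : Module.Free ℤ_[p] (integralClosure ℤ_[p] F) := IsIntegralClosure.module_free ℤ_[p] ℚ_[p] F (integralClosure ℤ_[p] F)
  have hOFinj : Function.Injective (algebraMap (integralClosure ℤ_[p] F) F) := IsFractionRing.injective (integralClosure ℤ_[p] F) F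
  haveI : CharZero F := charZero_of_injective_algebraMap (algebraMap ℚ_[p] F).injective
  haveI : CharZero (integralClosure ℤ_[p] F) := (algebraMap (integralClosure ℤ_[p] F) F).charZero
  have hP0 : (p : integralClosure ℤ_[p] F) ≠ 0 := Nat.cast_ne_zero.mpr (Fact.out : p.Prime).ne_zero
  have hPnu : ¬ IsUnit (p : integralClosure ℤ_[p] F) := by
    intro hu
    obtain ⟨v, hv⟩ := hu.exists_right_inv
    have hvF : algebraMap (integralClosure ℤ_[p] F) F v = algebraMap ℚ_[p] F ((p : ℚ_[p])⁻¹) := by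
      have h3 : algebraMap ℚ_[p] F (p : ℚ_[p]) * algebraMap (integralClosure ℤ_[p] F) F v = 1 := by
        rw [map_natCast, ← map_natCast (algebraMap (integralClosure ℤ_[p] F) F) p, ← map_mul,
          hv, map_one]
      rw [map_inv₀]
      exact (inv_eq_of_mul_eq_one_right h3).symm
    have hint : IsIntegral ℤ_[p] ((p : ℚ_[p])⁻¹) := by
      have h3 : IsIntegral ℤ_[p] (algebraMap (integralClosure ℤ_[p] F) F v) := v.2
      rw [hvF] at h3
      exact (isIntegral_algebraMap_iff (algebraMap ℚ_[p] F).injective).mp h3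
    obtain ⟨y, hy⟩ := IsIntegrallyClosed.isIntegral_iff.mp hint
    have hyp : y * (p : ℤ_[p]) = 1 := by
      apply IsFractionRing.injective ℤ_[p] ℚ_[p]
      rw [map_mul, hy, map_one, map_natCast]
      field_simp
      exact div_self (Nat.cast_ne_zero.mpr (Fact.out : p.Prime).ne_zero)
    exact PadicInt.p_nonunit (IsUnit.of_mul_eq_one _ (mul_comm y _ ▸ hyp))
  -- sandwich to get adic completeness at the maximal ideal of O
  haveI : IsAdicComplete (maximalIdeal ℤ_[p]) (integralClosure ℤ_[p] F) :=
    isAdicComplete_of_basis _ (Module.Free.chooseBasis ℤ_[p] (integralClosure ℤ_[p] F))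
  obtain ⟨N, u, hNu⟩ := IsDiscreteValuationRing.eq_unit_mul_pow_irreducible hP0 ha
  have hpmem : (p : ℤ_[p]) ∈ maximalIdeal ℤ_[p] :=
    (mem_maximalIdeal _).mpr PadicInt.p_nonunit
  have hsw1 : ∀ k : ℕ, ∃ n : ℕ, ∀ z : ↥(integralClosure ℤ_[p] F),
      z ∈ (maximalIdeal (integralClosure ℤ_[p] F)) ^ n →
      z ∈ ((maximalIdeal ℤ_[p]) ^ k • (⊤ : Submodule ℤ_[p] ↥(integralClosure ℤ_[p] F))) := by
    intro k
    refine ⟨N * k, fun z hz => ?_⟩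
    rw [ha.maximalIdeal_eq, Ideal.span_singleton_pow, Ideal.mem_span_singleton] at hz
    obtain ⟨c, hc⟩ := hz
    have h5 : ((u⁻¹ ^ k : (↥(integralClosure ℤ_[p] F))ˣ) : ↥(integralClosure ℤ_[p] F)) *
        (p : integralClosure ℤ_[p] F) ^ k = a ^ (N * k) := by
      rw [hNu, mul_pow, ← pow_mul, ← mul_assoc, ← Units.val_pow_eq_pow_val, ← Units.val_mul]
      simp
    have h6 : z = (p : ℤ_[p]) ^ k • (((u⁻¹ ^ k : (↥(integralClosure ℤ_[p] F))ˣ) :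
        ↥(integralClosure ℤ_[p] F)) * c) := by
      rw [Algebra.smul_def, map_pow, map_natCast, hc, ← h5]
      ring
    rw [h6]
    exact Submodule.smul_mem_smul (Ideal.pow_mem_pow hpmem k) trivial
  have hsw2 : ∀ n : ℕ, ∃ k : ℕ, ∀ z : ↥(integralClosure ℤ_[p] F),
      z ∈ ((maximalIdeal ℤ_[p]) ^ k • (⊤ : Submodule ℤ_[p] ↥(integralClosure ℤ_[p] F))) →
      z ∈ (maximalIdeal (integralClosure ℤ_[p] F)) ^ n := by
    intro n
    refine ⟨n, fun z hz => ?_⟩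
    refine Submodule.smul_induction_on hz ?_ (fun y z' hy hz' => Ideal.add_mem _ hy hz')
    intro r hr m _
    rw [Algebra.smul_def]
    refine Ideal.mul_mem_right _ _ ?_
    rw [PadicInt.maximalIdeal_eq_span_p, Ideal.span_singleton_pow,
      Ideal.mem_span_singleton] at hr
    obtain ⟨c, hc⟩ := hr
    rw [hc, map_mul, map_pow, map_natCast]
    exact Ideal.mul_mem_right _ _ (Ideal.pow_mem_pow
      ((mem_maximalIdeal _).mpr (mem_nonunits_iff.mpr hPnu)) n)
  haveI : IsAdicComplete (maximalIdeal (integralClosure ℤ_[p] F)) (integralClosure ℤ_[p] F) :=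
    isAdicComplete_sandwich _ _ hsw1 hsw2 inferInstance
  -- residue field
  haveI hfinRF : Finite (ResidueField (integralClosure ℤ_[p] F)) :=
    Nat.finite_of_card_ne_zero (by intro h; rw [h] at hq; simp at hq)
  haveI := Fintype.ofFinite (ResidueField (integralClosure ℤ_[p] F))
  have hqodd : Fintype.card (ResidueField (integralClosure ℤ_[p] F)) % 2 = 1 := by
    have := hq
    rwa [Nat.card_eq_fintype_card, Nat.odd_iff] at this
  have h2unit : (2 : integralClosure ℤ_[p] F) ∉ maximalIdeal (integralClosure ℤ_[p] F) := by
    intro hmem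
    have h20 : ((2 : ℕ) : ResidueField (integralClosure ℤ_[p] F)) = 0 := by
      have := Ideal.Quotient.eq_zero_iff_mem.mpr hmem
      exact_mod_cast (map_ofNat (residue (integralClosure ℤ_[p] F)) 2).symm.trans (show residue _ (2 : integralClosure ℤ_[p] F) = 0 from this)
    have hdvd : ringChar (ResidueField (integralClosure ℤ_[p] F)) ∣ 2 :=
      (ringChar.spec _ 2).mp h20
    rcases (Nat.dvd_prime Nat.prime_two).mp hdvd with h | h
    · have : (1 : ResidueField (integralClosure ℤ_[p] F)) = 0 := by
        have := ringChar.spec (ResidueField (integralClosure ℤ_[p] F)) 1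
        rw [h] at this
        simpa using this.mpr dvd_rfl
      exact one_ne_zero this
    · rw [FiniteField.even_card_iff_char_two] at h
      omega
  -- coercion check
  have hca : (a : F) = algebraMap ↥(integralClosure ℤ_[p] F) F a := rfl
  have hA0 : algebraMap ↥(integralClosure ℤ_[p] F) F a ≠ 0 :=
    fun h => ha.ne_zero (hOFinj (by rw [h, map_zero]))
  have hB0 : algebraMap ↥(integralClosure ℤ_[p] F) F b ≠ 0 :=
    fun h => hb.ne_zero (hOFinj (by rw [h, map_zero]))
  obtain ⟨ν, hν_eq⟩ :=
    IsDiscreteValuationRing.associated_of_irreducible (↥(integralClosure ℤ_[p] F)) ha hb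
  have hBA : algebraMap ↥(integralClosure ℤ_[p] F) F b =
      algebraMap ↥(integralClosure ℤ_[p] F) F a *
      algebraMap ↥(integralClosure ℤ_[p] F) F (ν : ↥(integralClosure ℤ_[p] F)) := by
    rw [← map_mul, hν_eq]
  have ht0 : algebraMap ↥(integralClosure ℤ_[p] F) F (ν : ↥(integralClosure ℤ_[p] F)) ≠ 0 :=
    fun h => ν.ne_zero (hOFinj (by rw [h, map_zero]))
  have hν_nonsq : ¬ ∃ c : F, c ^ 2 =
      algebraMap ↥(integralClosure ℤ_[p] F) F (ν : ↥(integralClosure ℤ_[p] F)) := by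
    rintro ⟨c, hc⟩
    apply hab
    have hc0 : c ≠ 0 := by
      intro h
      rw [h] at hc
      apply ht0
      rw [← hc]; ring
    refine ⟨c⁻¹, ?_⟩
    have hcb : (b : F) = algebraMap ↥(integralClosure ℤ_[p] F) F b := rfl
    rw [hca, hcb, hBA, inv_pow, hc]
    field_simp
  have hAnsq : ¬ ∃ c : F, c ^ 2 = (a : F) := irreducible_not_sq ha
  have hBnsq : ¬ ∃ c : F, c ^ 2 = (b : F) := irreducible_not_sq hb
  have hnorm1 : Algebra.norm F e₁ = -(a : F) := norm_sqrt hd₁ _ hAnsq e₁ he₁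
  have hnorm2 : Algebra.norm F e₂ = -(b : F) := norm_sqrt hd₂ _ hBnsq e₂ he₂
  have hnorm1' : Algebra.norm F e₁ = -(algebraMap ↥(integralClosure ℤ_[p] F) F a) := hnorm1
  have hnorm2' : Algebra.norm F e₂ = -(algebraMap ↥(integralClosure ℤ_[p] F) F b) := hnorm2
  have he₁0 : e₁ ≠ 0 := by
    intro h
    rw [h] at he₁
    apply hA0
    rw [← hca]
    have h8 : algebraMap F E₁ (a : F) = 0 := by rw [← he₁]; ring
    rwa [map_eq_zero_iff _ (algebraMap F E₁).injective] at h8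
  have he₂0 : e₂ ≠ 0 := by
    intro h
    rw [h] at he₂
    apply hB0
    have h8 : algebraMap F E₂ (b : F) = 0 := by rw [← he₂]; ring
    rwa [map_eq_zero_iff _ (algebraMap F E₂).injective] at h8
  -- decompose x
  obtain ⟨r, s, hsnz, hrs⟩ := IsFractionRing.div_surjective (A := ↥(integralClosure ℤ_[p] F)) x
  have hs0 : s ≠ 0 := nonZeroDivisors.ne_zero hsnz
  have hr0 : r ≠ 0 := by
    intro h
    rw [h, map_zero, zero_div] at hrs
    exact hx hrs.symm
  obtain ⟨n₁, u₁, hu₁⟩ := IsDiscreteValuationRing.eq_unit_mul_pow_irreducible hr0 ha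
  obtain ⟨n₂, u₂, hu₂⟩ := IsDiscreteValuationRing.eq_unit_mul_pow_irreducible hs0 ha
  have hu₂0 : algebraMap ↥(integralClosure ℤ_[p] F) F ((u₂ : ↥(integralClosure ℤ_[p] F))) ≠ 0 :=
    fun h => u₂.ne_zero (hOFinj (by rw [h, map_zero]))
  have hU2 : algebraMap ↥(integralClosure ℤ_[p] F) F ((u₂⁻¹ : _ˣ) : ↥(integralClosure ℤ_[p] F)) =
      (algebraMap ↥(integralClosure ℤ_[p] F) F ((u₂ : ↥(integralClosure ℤ_[p] F))))⁻¹ := by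
    have h9 : algebraMap ↥(integralClosure ℤ_[p] F) F ((u₂ : ↥(integralClosure ℤ_[p] F))) *
        algebraMap ↥(integralClosure ℤ_[p] F) F ((u₂⁻¹ : _ˣ) : ↥(integralClosure ℤ_[p] F)) = 1 := by
      rw [← map_mul]
      simp
    exact (inv_eq_of_mul_eq_one_right h9).symm
  have hT0 : algebraMap ↥(integralClosure ℤ_[p] F) F
      ((↑(u₁ * u₂⁻¹)) : ↥(integralClosure ℤ_[p] F)) ≠ 0 :=
    fun h => (u₁ * u₂⁻¹).ne_zero (hOFinj (by rw [h, map_zero]))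
  have hxT : x = algebraMap ↥(integralClosure ℤ_[p] F) F
      ((↑(u₁ * u₂⁻¹)) : ↥(integralClosure ℤ_[p] F)) *
      (algebraMap ↥(integralClosure ℤ_[p] F) F a) ^ ((n₁ : ℤ) - (n₂ : ℤ)) := by
    rw [← hrs, hu₁, hu₂, Units.val_mul, map_mul, map_mul, map_mul, map_pow, map_pow, hU2,
      zpow_sub₀ hA0, zpow_natCast, zpow_natCast]
    field_simp
    try ring
  obtain ⟨S, hS0, hcase⟩ : ∃ S : F, S ≠ 0 ∧
      ((algebraMap ↥(integralClosure ℤ_[p] F) F a) ^ ((n₁ : ℤ) - n₂) = S ^ 2 ∨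
       (algebraMap ↥(integralClosure ℤ_[p] F) F a) ^ ((n₁ : ℤ) - n₂) =
         S ^ 2 * algebraMap ↥(integralClosure ℤ_[p] F) F a) := by
    rcases Int.even_or_odd ((n₁ : ℤ) - n₂) with ⟨k, hk⟩ | ⟨k, hk⟩
    · refine ⟨algebraMap ↥(integralClosure ℤ_[p] F) F a ^ k, zpow_ne_zero _ hA0, Or.inl ?_⟩
      rw [hk, zpow_add₀ hA0, sq]
    · refine ⟨algebraMap ↥(integralClosure ℤ_[p] F) F a ^ k, zpow_ne_zero _ hA0, Or.inr ?_⟩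
      rw [hk, two_mul, zpow_add₀ hA0, zpow_add₀ hA0, zpow_one, sq]
      try ring
  have hnormmap₁ : ∀ m : F, Algebra.norm F (algebraMap F E₁ m) = m ^ 2 := by
    intro m; rw [Algebra.norm_algebraMap, hd₁]
  have hnormmap₂ : ∀ m : F, Algebra.norm F (algebraMap F E₂ m) = m ^ 2 := by
    intro m; rw [Algebra.norm_algebraMap, hd₂]
  rcases hcase with hcA | hcA
  · have hxeq : x = S ^ 2 * algebraMap ↥(integralClosure ℤ_[p] F) F
        ((↑(u₁ * u₂⁻¹)) : ↥(integralClosure ℤ_[p] F)) := by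
      rw [hxT, hcA]; ring
    by_cases hsq : ∃ c : F, c ^ 2 = algebraMap ↥(integralClosure ℤ_[p] F) F
        ((↑(u₁ * u₂⁻¹)) : ↥(integralClosure ℤ_[p] F))
    · obtain ⟨c, hcc⟩ := hsq
      have hc0 : c ≠ 0 := by
        intro h
        apply hT0
        rw [← hcc, h]; ring
      refine ⟨algebraMap F E₁ (S * c), 1, ?_, one_ne_zero, ?_⟩
      · exact (map_ne_zero_iff _ (algebraMap F E₁).injective).mpr (mul_ne_zero hS0 hc0)
      · rw [hnormmap₁, map_one, mul_one, hxeq, ← hcc]; ring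
    · obtain ⟨c, hcc⟩ := key_units (K := F) h2unit (u₁ * u₂⁻¹) ν hsq hν_nonsq
      have hc0 : c ≠ 0 := by
        intro h
        apply hT0
        rw [hcc, h]; ring
      refine ⟨algebraMap F E₁ (S * c / algebraMap ↥(integralClosure ℤ_[p] F) F a) * e₁, e₂,
        ?_, he₂0, ?_⟩
      · exact mul_ne_zero ((map_ne_zero_iff _ (algebraMap F E₁).injective).mpr
          (div_ne_zero (mul_ne_zero hS0 hc0) hA0)) he₁0
      · rw [map_mul (Algebra.norm F), hnormmap₁, hnorm1', hnorm2', hxeq, hcc, hBA]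
        field_simp
  · have hxeq : x = S ^ 2 * algebraMap ↥(integralClosure ℤ_[p] F) F
        ((↑(u₁ * u₂⁻¹)) : ↥(integralClosure ℤ_[p] F)) *
        algebraMap ↥(integralClosure ℤ_[p] F) F a := by
      rw [hxT, hcA]; ring
    by_cases hsq : ∃ c : F, c ^ 2 = - algebraMap ↥(integralClosure ℤ_[p] F) F
        ((↑(u₁ * u₂⁻¹)) : ↥(integralClosure ℤ_[p] F))
    · obtain ⟨c, hcc⟩ := hsq
      have hc0 : c ≠ 0 := by
        intro h
        apply hT0
        have h11 := hcc
        rw [h] at h11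
        linear_combination h11
      refine ⟨algebraMap F E₁ (S * c) * e₁, 1, ?_, one_ne_zero, ?_⟩
      · exact mul_ne_zero ((map_ne_zero_iff _ (algebraMap F E₁).injective).mpr
          (mul_ne_zero hS0 hc0)) he₁0
      · rw [map_mul (Algebra.norm F), hnormmap₁, hnorm1', map_one, mul_one, hxeq]
        have h10 : algebraMap ↥(integralClosure ℤ_[p] F) F
            ((↑(u₁ * u₂⁻¹)) : ↥(integralClosure ℤ_[p] F)) = - c ^ 2 := by
          linear_combination hcc
        rw [h10]; ring
    · have hsq' : ¬ ∃ c : F, c ^ 2 = algebraMap ↥(integralClosure ℤ_[p] F) F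
          ((↑(-(u₁ * u₂⁻¹))) : ↥(integralClosure ℤ_[p] F)) := by
        rintro ⟨c, hc⟩
        apply hsq
        refine ⟨c, ?_⟩
        rw [hc, Units.val_neg, map_neg]
      obtain ⟨c, hcc⟩ := key_units (K := F) h2unit (-(u₁ * u₂⁻¹)) ν hsq' hν_nonsq
      have hcc' : - algebraMap ↥(integralClosure ℤ_[p] F) F
          ((↑(u₁ * u₂⁻¹)) : ↥(integralClosure ℤ_[p] F)) =
          algebraMap ↥(integralClosure ℤ_[p] F) F (ν : ↥(integralClosure ℤ_[p] F)) * c ^ 2 := by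
        rw [← hcc, Units.val_neg, map_neg]
      have hc0 : c ≠ 0 := by
        intro h
        apply hT0
        rw [h] at hcc'
        have h11 : - algebraMap ↥(integralClosure ℤ_[p] F) F
            ((↑(u₁ * u₂⁻¹)) : ↥(integralClosure ℤ_[p] F)) = 0 := by rw [hcc']; ring
        exact neg_eq_zero.mp h11
      refine ⟨1, algebraMap F E₂ (S * c) * e₂, one_ne_zero, ?_, ?_⟩
      · exact mul_ne_zero ((map_ne_zero_iff _ (algebraMap F E₂).injective).mpr
          (mul_ne_zero hS0 hc0)) he₂0
      · rw [map_one, map_mul (Algebra.norm F), hnormmap₂, hnorm2', one_mul, hxeq, hBA]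
        have h10 : algebraMap ↥(integralClosure ℤ_[p] F) F
            ((↑(u₁ * u₂⁻¹)) : ↥(integralClosure ℤ_[p] F)) =
            -(algebraMap ↥(integralClosure ℤ_[p] F) F (ν : ↥(integralClosure ℤ_[p] F)) * c ^ 2) := by
          linear_combination -hcc'
        rw [h10]; ring
end
end
end

section
/- Let R be a discrete valuation ring that is complete (adically complete) with respect to its maximal ideal, and let π ∈ R be a uniformizer (an irreducible element). If α ∈ R satisfies α − 1 ∈ (8π), the ideal generated by 8π, then there exists β ∈ R with β⁴ = α. -/
open Polynomial

lemma aux_hensel_quad (R : Type) [CommRing R] [IsDomain R]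
    [IsDiscreteValuationRing R] [IsAdicComplete (IsLocalRing.maximalIdeal R) R]
    (c : R) (hc : c ∈ IsLocalRing.maximalIdeal R) :
    ∃ y : R, y ^ 2 + y = c ∧ y ∈ IsLocalRing.maximalIdeal R := by
  have hmonic : (X ^ 2 + X - C c : R[X]).Monic := by
    have h1 : ((X : R[X]) - C c).degree < 2 := by
      apply lt_of_le_of_lt (Polynomial.degree_sub_le _ _)
      rw [max_lt_iff]
      exact ⟨by simp, lt_of_le_of_lt Polynomial.degree_C_le (by norm_num)⟩
    simpa [add_sub_assoc] using Polynomial.monic_X_pow_add h1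
  obtain ⟨a, ha, ham⟩ := HenselianRing.is_henselian (I := IsLocalRing.maximalIdeal R)
    (X ^ 2 + X - C c) hmonic 0 (by simpa using (IsLocalRing.maximalIdeal R).neg_mem hc)
    (by simp)
  refine ⟨a, ?_, by simpa using ham⟩
  have := ha
  simp only [Polynomial.IsRoot, Polynomial.eval_sub, Polynomial.eval_add, Polynomial.eval_pow,
    Polynomial.eval_X, Polynomial.eval_C] at this
  linear_combination this

/-- Let `R` be a discrete valuation ring that is complete with respect to its maximal ideal,
and let `π ∈ R` be a uniformizer. If `α ∈ R` satisfies `α - 1 ∈ (8π)`, then `α` is a fourth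
power in `R`. -/
theorem fourth_power_of_congruent_one (R : Type) [CommRing R] [IsDomain R]
    [IsDiscreteValuationRing R] [IsAdicComplete (IsLocalRing.maximalIdeal R) R]
    (π : R) (hπ : Irreducible π) (α : R) (hα : α - 1 ∈ Ideal.span {8 * π}) :
    ∃ β : R, β ^ 4 = α := by
  obtain ⟨t, ht⟩ := Ideal.mem_span_singleton'.mp hα
  -- ht : t * (8 * π) = α - 1  (check direction)
  have hπm : π ∈ IsLocalRing.maximalIdeal R := hπ.not_isUnit
  obtain ⟨y, hy, hym⟩ := aux_hensel_quad R (2 * π * t)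
    (Ideal.mul_mem_right _ _ (Ideal.mul_mem_left _ 2 hπm))
  have hyu : IsUnit (y + 1) := by
    by_contra h
    have h1 : y + 1 ∈ IsLocalRing.maximalIdeal R := h
    have : (1 : R) ∈ IsLocalRing.maximalIdeal R := by
      simpa using (IsLocalRing.maximalIdeal R).sub_mem h1 hym
    exact (IsLocalRing.maximalIdeal R).ne_top_iff_one.mp (Ideal.IsMaximal.ne_top inferInstance) this
  obtain ⟨v, hv⟩ := hyu.exists_right_inv
  obtain ⟨z, hz, _⟩ := aux_hensel_quad R (π * (t * v)) (Ideal.mul_mem_right _ _ hπm)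
  refine ⟨1 + 2 * z, ?_⟩
  have h1 : (1 + 2 * z) ^ 2 = 1 + 2 * y := by
    linear_combination 4 * hz - 2 * v * hy + 2 * y * hv
  have h2 : (1 + 2 * y) ^ 2 = α := by
    linear_combination 4 * hy + ht
  calc (1 + 2 * z) ^ 4 = ((1 + 2 * z) ^ 2) ^ 2 := by ring
    _ = α := by rw [h1, h2]
end
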